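/- Let k be a finite field with q elements, A a finite-dimensional k-algebra, and M₁, ..., M_r pairwise non-isomorphic finite-dimensional A-modules such that for each i the endomorphism ring End_A(M_i) is a field with q^{ε_i} elements. Let s₁, ..., s_r be positive integers and M = M₁^{⊕s₁} ⊕ ··· ⊕ M_r^{⊕s_r}. Then |End_A(M)| · ∏_{i=1}^{r} ∏_{t=0}^{s_i - 1} (q^{(s_i - t)ε_i} - 1) = |Aut_A(M)| · ∏_{i=1}^{r} ∏_{t=0}^{s_i - 1} q^{(s_i - t)ε_i}; equivalently, |End_A(M)| / |Aut_A(M)| = ∏_{i=1}^{r} ∏_{t=0}^{s_i - 1} (1 - q^{-(s_i - t)ε_i})^{-1}. -/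

import Mathlib

theorem ldu {E : Type*} [Ring E] (εt ε' a b c w : E)
    (i1 : εt * εt = εt) (i2 : ε' * ε' = ε') (i3 : εt * ε' = 0) (i4 : ε' * εt = 0)
    (ea : ε' * a = a) (ae : a * ε' = a)
    (eb : ε' * b = b) (bt : b * εt = b)
    (tc : εt * c = c) (ce : c * ε' = c)
    (ew : ε' * w = w) (we : w * ε' = w)
    (aw : a * w = ε' - w) (wa : w * a = ε' - w)
    (cwb : c * (w * b) = 0) :
    ((εt + ε') + (a + b + c)) * ((εt + ε' - w * b) * ((w + εt) * (εt + ε' - c * w))) = εt + ε'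
  ∧ ((εt + ε' - w * b) * ((w + εt) * (εt + ε' - c * w))) * ((εt + ε') + (a + b + c)) = εt + ε'
  ∧ (εt + ε') * (((εt + ε' - w * b) * ((w + εt) * (εt + ε' - c * w))) * (εt + ε')) =
      (εt + ε' - w * b) * ((w + εt) * (εt + ε' - c * w)) := by
  have ap : ∀ {u v r : E}, u * v = r → ∀ z : E, u * (v * z) = r * z := by
    intro u v r h z; rw [← mul_assoc, h]
  have ta : εt * a = 0 := by rw [← ea, ← mul_assoc, i3, zero_mul]
  have at' : a * εt = 0 := by rw [← ae, mul_assoc, i4, mul_zero]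
  have tb : εt * b = 0 := by rw [← eb, ← mul_assoc, i3, zero_mul]
  have be : b * ε' = 0 := by rw [← bt, mul_assoc, i3, mul_zero]
  have ec : ε' * c = 0 := by rw [← tc, ← mul_assoc, i4, zero_mul]
  have ct : c * εt = 0 := by rw [← ce, mul_assoc, i4, mul_zero]
  have tw : εt * w = 0 := by rw [← ew, ← mul_assoc, i3, zero_mul]
  have wt : w * εt = 0 := by rw [← we, mul_assoc, i4, mul_zero]
  have ba : b * a = 0 := by rw [← bt, mul_assoc, ta, mul_zero]
  have bb : b * b = 0 := by nth_rewrite 1 [← bt]; rw [mul_assoc, tb, mul_zero]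
  have bw : b * w = 0 := by rw [← bt, mul_assoc, tw, mul_zero]
  have wc : w * c = 0 := by rw [← we, mul_assoc, ec, mul_zero]
  have cc : c * c = 0 := by nth_rewrite 1 [← ce]; rw [mul_assoc, ec, mul_zero]
  have ac : a * c = 0 := by rw [← ae, mul_assoc, ec, mul_zero]
  have cwb' : ∀ z : E, c * (w * (b * z)) = 0 := by
    intro z
    rw [← mul_assoc w b z, ← mul_assoc c (w * b) z, cwb, zero_mul]
  refine ⟨?_, ?_, ?_⟩ <;>
  · simp only [mul_add, add_mul, mul_sub, sub_mul, mul_assoc,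
      i1, ap i1, i2, ap i2, i3, ap i3, i4, ap i4,
      ea, ap ea, ae, ap ae, eb, ap eb, bt, ap bt, tc, ap tc, ce, ap ce,
      ew, ap ew, we, ap we, aw, ap aw, wa, ap wa,
      ta, ap ta, at', ap at', tb, ap tb, be, ap be, ec, ap ec, ct, ap ct,
      tw, ap tw, wt, ap wt, ba, ap ba, bb, ap bb, bw, ap bw, wc, ap wc,
      cc, ap cc, ac, ap ac, cwb, cwb',
      zero_mul, mul_zero, add_zero, zero_add, sub_zero, zero_sub]
    abel

theorem corner_unit {E : Type*} [Ring E] {ι : Type*} [DecidableEq ι] (e : ι → E)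
    (hidem : ∀ i, e i * e i = e i) (horth : ∀ i j, i ≠ j → e i * e j = 0)
    (hkey : ∀ i j, i ≠ j → ∀ f g : E, e i * f * (e j * (g * e i)) = 0)
    (S : Finset ι) :
    ∀ x : E, (∑ i ∈ S, e i) * (x * ∑ i ∈ S, e i) = x →
      (∀ i ∈ S, e i * (x * e i) = 0) →
      ∃ y, ((∑ i ∈ S, e i) + x) * y = ∑ i ∈ S, e i ∧
        y * ((∑ i ∈ S, e i) + x) = ∑ i ∈ S, e i ∧
        (∑ i ∈ S, e i) * (y * ∑ i ∈ S, e i) = y := by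
  induction S using Finset.induction_on with
  | empty =>
    intro x hx _
    have hx0 : x = 0 := by simpa using hx.symm
    subst hx0
    exact ⟨0, by simp, by simp, by simp⟩
  | @insert t S' ht ih =>
    intro x hx hd
    rw [Finset.sum_insert ht] at hx ⊢
    set εt := e t with hεt
    set ε' := ∑ i ∈ S', e i with hε'
    have i1 : εt * εt = εt := hidem t
    have heL : ∀ i ∈ S', e i * ε' = e i := by
      intro i hi
      rw [hε', Finset.mul_sum,
        Finset.sum_eq_single_of_mem i hi fun j _ hne => horth i j hne.symm]
      exact hidem i
    have heR : ∀ i ∈ S', ε' * e i = e i := by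
      intro i hi
      rw [hε', Finset.sum_mul,
        Finset.sum_eq_single_of_mem i hi fun j _ hne => horth j i hne]
      exact hidem i
    have i2 : ε' * ε' = ε' := by
      rw [hε', Finset.sum_mul]
      exact Finset.sum_congr rfl fun i hi => heL i hi
    have i3 : εt * ε' = 0 := by
      rw [hε', Finset.mul_sum]
      exact Finset.sum_eq_zero fun j hj => horth t j fun h => ht (h ▸ hj)
    have i4 : ε' * εt = 0 := by
      rw [hε', Finset.sum_mul]
      exact Finset.sum_eq_zero fun j hj => horth j t fun h => ht (h ▸ hj)
    have hd0 : εt * (x * εt) = 0 := hd t (Finset.mem_insert_self t S')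
    set a := ε' * (x * ε') with ha
    set b := ε' * (x * εt) with hb
    set c := εt * (x * ε') with hc
    have ea : ε' * a = a := by rw [ha, ← mul_assoc, i2]
    have ae : a * ε' = a := by
      rw [ha, show ε' * (x * ε') * ε' = ε' * (x * (ε' * ε')) from by noncomm_ring, i2]
    have eb : ε' * b = b := by rw [hb, ← mul_assoc, i2]
    have bt : b * εt = b := by
      rw [hb, show ε' * (x * εt) * εt = ε' * (x * (εt * εt)) from by noncomm_ring, i1]
    have tc : εt * c = c := by rw [hc, ← mul_assoc, i1]
    have ce : c * ε' = c := by
      rw [hc, show εt * (x * ε') * ε' = εt * (x * (ε' * ε')) from by noncomm_ring, i2]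
    have hdecomp : x = a + b + c := by
      calc x = (εt + ε') * (x * (εt + ε')) := hx.symm
        _ = εt * (x * εt) + (ε' * (x * ε') + ε' * (x * εt) + εt * (x * ε')) := by noncomm_ring
        _ = a + b + c := by rw [hd0, zero_add, ← ha, ← hb, ← hc]
    obtain ⟨w, h1, h2, h3⟩ := ih a
      (by
        calc ε' * (a * ε') = ε' * ε' * (x * (ε' * ε')) := by rw [ha]; noncomm_ring
          _ = a := by rw [i2, ← ha])
      (fun i hi => by
        calc e i * (a * e i) = e i * ε' * (x * (ε' * e i)) := by rw [ha]; noncomm_ring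
          _ = e i * (x * e i) := by rw [heL i hi, heR i hi]
          _ = 0 := hd i (Finset.mem_insert_of_mem hi))
    have ew : ε' * w = w := by
      conv_lhs => rw [← h3]
      rw [← mul_assoc, i2, h3]
    have we : w * ε' = w := by
      conv_lhs => rw [← h3]
      rw [show ε' * (w * ε') * ε' = ε' * (w * (ε' * ε')) from by noncomm_ring, i2, h3]
    have aw : a * w = ε' - w := by
      have h1' : w + a * w = ε' := by
        have h := h1; rw [add_mul, ew] at h; exact h
      exact eq_sub_of_add_eq' h1'
    have wa : w * a = ε' - w := by
      have h2' : w + w * a = ε' := by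
        have h := h2; rw [mul_add, we] at h; exact h
      exact eq_sub_of_add_eq' h2'
    have cwb : c * (w * b) = 0 := by
      calc c * (w * b) = εt * x * (ε' * (w * (ε' * x) * εt)) := by
            rw [hc, hb]; noncomm_ring
        _ = ∑ i ∈ S', εt * x * (e i * (w * (ε' * x) * εt)) := by
            nth_rewrite 1 [hε']
            rw [Finset.sum_mul, Finset.mul_sum]
        _ = 0 := Finset.sum_eq_zero fun i hi =>
            hkey t i (fun h => ht (h ▸ hi)) x (w * (ε' * x))
    obtain ⟨H1, H2, H3⟩ := ldu εt ε' a b c w i1 i2 i3 i4 ea ae eb bt tc ce ew we aw wa cwb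
    refine ⟨(εt + ε' - w * b) * ((w + εt) * (εt + ε' - c * w)), ?_, ?_, ?_⟩
    · rw [hdecomp]; exact H1
    · rw [hdecomp]; exact H2
    · exact H3

section stmt8aux

variable {A : Type} [Ring A] {r : ℕ} {M : Fin r → Type}
  [∀ i, AddCommGroup (M i)] [∀ i, Module A (M i)] (s : Fin r → ℕ)

/-- fine projection -/
def s8pp (i : Fin r) (a : Fin (s i)) : (∀ j, Fin (s j) → M j) →ₗ[A] M i :=
  (LinearMap.proj a).comp
    (LinearMap.proj (R := A) (φ := fun j => Fin (s j) → M j) i)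

/-- fine inclusion -/
def s8jj (i : Fin r) (b : Fin (s i)) : M i →ₗ[A] (∀ j, Fin (s j) → M j) :=
  (LinearMap.single A (fun j => Fin (s j) → M j) i).comp
    (LinearMap.single A (fun _ : Fin (s i) => M i) b)

/-- coarse idempotent -/
def s8ee (i : Fin r) : Module.End A (∀ j, Fin (s j) → M j) :=
  (LinearMap.single A (fun j => Fin (s j) → M j) i).comp
    (LinearMap.proj (R := A) (φ := fun j => Fin (s j) → M j) i)

/-- block matrix of an endomorphism -/
def s8bb (i : Fin r) (f : Module.End A (∀ j, Fin (s j) → M j)) :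
    Matrix (Fin (s i)) (Fin (s i)) (Module.End A (M i)) :=
  Matrix.of fun a b => (s8pp s i a) ∘ₗ f ∘ₗ (s8jj s i b)

/-- block-diagonal section -/
def s8dd (m : ∀ i, Matrix (Fin (s i)) (Fin (s i)) (Module.End A (M i))) :
    Module.End A (∀ j, Fin (s j) → M j) :=
  LinearMap.pi fun i => LinearMap.pi fun a => ∑ b, (m i a b) ∘ₗ (s8pp s i b)

lemma s8pp_apply (i : Fin r) (a : Fin (s i)) (x : ∀ j, Fin (s j) → M j) :
    s8pp (A := A) s i a x = x i a := rfl

lemma s8jj_apply (i : Fin r) (b : Fin (s i)) (y : M i) :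
    s8jj (A := A) s i b y = Pi.single i (Pi.single b y) := rfl

lemma s8ee_apply (i : Fin r) (x : ∀ j, Fin (s j) → M j) :
    s8ee (A := A) (M := M) s i x = Pi.single i (x i) := rfl

lemma s8pp_jj (i : Fin r) (a b : Fin (s i)) (y : M i) :
    s8pp (A := A) s i a (s8jj (A := A) s i b y) = (Pi.single b y : Fin (s i) → M i) a := by
  simp [s8pp, s8jj, LinearMap.proj, LinearMap.single]
  show (Pi.single i (Pi.single b y) : ∀ l, Fin (s l) → M l) i a = _
  rw [Pi.single_eq_same]

lemma s8pp_jj_ne {i j : Fin r} (h : i ≠ j) (a : Fin (s i)) (c : Fin (s j)) (y : M j) :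
    s8pp (A := A) s i a (s8jj (A := A) s j c y) = 0 := by
  have h1 : (Pi.single j (Pi.single c y) : ∀ l, Fin (s l) → M l) i = 0 :=
    Pi.single_eq_of_ne h _
  show (Pi.single j (Pi.single c y) : ∀ l, Fin (s l) → M l) i a = 0
  rw [h1]; rfl

lemma s8dd_apply (m : ∀ i, Matrix (Fin (s i)) (Fin (s i)) (Module.End A (M i)))
    (x : ∀ j, Fin (s j) → M j) (i : Fin r) (a : Fin (s i)) :
    s8dd s m x i a = ∑ b, m i a b (x i b) := by
  simp [s8dd, LinearMap.pi_apply, LinearMap.sum_apply, s8pp_apply]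



theorem s8key0 {X Y : Type} [AddCommGroup X] [Module A X] [AddCommGroup Y] [Module A Y]
    (hX : IsField (Module.End A X)) (hY : IsField (Module.End A Y))
    (hno : IsEmpty (X ≃ₗ[A] Y)) (g : Y →ₗ[A] X) (h : X →ₗ[A] Y) :
    g ∘ₗ h = 0 := by
  by_contra hne
  set φ : Module.End A X := g ∘ₗ h with hφ
  obtain ⟨ψ, hψ⟩ := hX.mul_inv_cancel hne
  have hψφ : ψ * φ = 1 := by rw [hX.mul_comm]; exact hψ
  set ee : Module.End A Y := h ∘ₗ (ψ ∘ₗ g) with hee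
  have heene : ee ≠ 0 := by
    intro h0
    have : φ * (ψ * φ) = g ∘ₗ (ee ∘ₗ h) := by
      ext x
      simp [hee, hφ, Module.End.mul_apply]
    rw [h0, hψφ, mul_one] at this
    simp at this
    exact hne this
  have hgh : ∀ z, g (h z) = φ z := fun z => rfl
  have heid : ee * ee = ee := by
    ext y
    have h2 := LinearMap.congr_fun hψ (g y)
    simp only [Module.End.mul_apply, Module.End.one_apply] at h2
    simp only [hee, Module.End.mul_apply, LinearMap.comp_apply, hgh, h2]
  obtain ⟨ii, hii⟩ := hY.mul_inv_cancel heene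
  have hee1 : ee = 1 := by
    calc ee = ee * (ee * ii) := by rw [hii, mul_one]
    _ = (ee * ee) * ii := by rw [mul_assoc]
    _ = 1 := by rw [heid, hii]
  have e2 : (ψ ∘ₗ g) ∘ₗ h = LinearMap.id := by
    have : (ψ ∘ₗ g) ∘ₗ h = ψ * φ := by ext x; simp [hφ, Module.End.mul_apply]
    rw [this, hψφ]; rfl
  have e1 : h ∘ₗ (ψ ∘ₗ g) = LinearMap.id := by
    rw [← hee, hee1]; rfl
  exact hno.false (LinearEquiv.ofLinear h (ψ ∘ₗ g) e1 e2)

lemma s8decomp (x : ∀ j, Fin (s j) → M j) :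
    ∑ j, ∑ c, s8jj (A := A) s j c (s8pp (A := A) s j c x) = x := by
  have step : ∀ j : Fin r, ∑ c, s8jj (A := A) s j c (s8pp (A := A) s j c x)
      = Pi.single j (x j) := by
    intro j
    calc ∑ c, s8jj (A := A) s j c (s8pp (A := A) s j c x)
        = (LinearMap.single A (fun l => Fin (s l) → M l) j) (∑ c, Pi.single c (x j c)) := by
          rw [map_sum]; rfl
      _ = Pi.single j (x j) := by rw [Finset.univ_sum_single]; rfl
  rw [Finset.sum_congr rfl fun j _ => step j, Finset.univ_sum_single]

lemma s8ee_idem (i : Fin r) :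
    s8ee (A := A) (M := M) s i * s8ee s i = s8ee s i := by
  apply LinearMap.ext; intro x
  simp only [Module.End.mul_apply, s8ee_apply, Pi.single_eq_same]

lemma s8ee_orth {i j : Fin r} (h : i ≠ j) :
    s8ee (A := A) (M := M) s i * s8ee s j = 0 := by
  apply LinearMap.ext; intro x
  simp only [Module.End.mul_apply, s8ee_apply, LinearMap.zero_apply]
  rw [Pi.single_eq_of_ne h, Pi.single_zero]

lemma s8ee_sum : ∑ i, s8ee (A := A) (M := M) s i = 1 := by
  apply LinearMap.ext; intro x
  simp only [LinearMap.sum_apply, s8ee_apply, Module.End.one_apply]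
  exact Finset.univ_sum_single x

lemma s8key1 (hnoniso : ∀ i j, i ≠ j → IsEmpty (M i ≃ₗ[A] M j))
    (hfield : ∀ i, IsField (Module.End A (M i)))
    {i j : Fin r} (hij : i ≠ j) (f g : Module.End A (∀ l, Fin (s l) → M l))
    (a b : Fin (s i)) (c : Fin (s j)) (y : M i) :
    s8pp (A := A) s i a (f (s8jj (A := A) s j c
      (s8pp (A := A) s j c (g (s8jj (A := A) s i b y))))) = 0 := by
  have h0 := s8key0 (hfield i) (hfield j) (hnoniso i j hij)
      ((s8pp (A := A) s i a) ∘ₗ f ∘ₗ (s8jj s j c)) ((s8pp (A := A) s j c) ∘ₗ g ∘ₗ (s8jj s i b))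
  have h1 := LinearMap.congr_fun h0 y
  simpa using h1

lemma s8key1comp (hnoniso : ∀ i j, i ≠ j → IsEmpty (M i ≃ₗ[A] M j))
    (hfield : ∀ i, IsField (Module.End A (M i)))
    {i j : Fin r} (hij : i ≠ j) (f g : Module.End A (∀ l, Fin (s l) → M l)) :
    ((LinearMap.proj (R := A) (φ := fun l => Fin (s l) → M l) i) ∘ₗ f ∘ₗ
        (LinearMap.single A (fun l => Fin (s l) → M l) j)) ∘ₗ
      ((LinearMap.proj (R := A) (φ := fun l => Fin (s l) → M l) j) ∘ₗ g ∘ₗ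
        (LinearMap.single A (fun l => Fin (s l) → M l) i)) = 0 := by
  apply LinearMap.pi_ext; intro b y
  simp only [LinearMap.comp_apply, LinearMap.zero_apply]
  funext a
  have h1 : (g (s8jj (A := A) s i b y)) j
      = ∑ c, Pi.single c (s8pp (A := A) s j c (g (s8jj (A := A) s i b y))) :=
    (Finset.univ_sum_single _).symm
  show s8pp (A := A) s i a (f ((LinearMap.single A (fun l => Fin (s l) → M l) j)
      ((g (s8jj (A := A) s i b y)) j))) = 0
  rw [h1]
  simp only [map_sum]
  exact Finset.sum_eq_zero fun c _ => s8key1 s hnoniso hfield hij f g a b c y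

lemma s8ee_key (hnoniso : ∀ i j, i ≠ j → IsEmpty (M i ≃ₗ[A] M j))
    (hfield : ∀ i, IsField (Module.End A (M i)))
    {i j : Fin r} (hij : i ≠ j) (f g : Module.End A (∀ l, Fin (s l) → M l)) :
    s8ee (A := A) s i * f * (s8ee s j * (g * s8ee s i)) = 0 := by
  apply LinearMap.ext; intro x
  simp only [Module.End.mul_apply, LinearMap.zero_apply, s8ee_apply]
  have h2 := LinearMap.congr_fun (s8key1comp s hnoniso hfield hij f g) (x i)
  simp only [LinearMap.comp_apply, LinearMap.zero_apply, LinearMap.coe_single,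
    LinearMap.proj_apply] at h2
  rw [h2, Pi.single_zero]

lemma s8bb_mul (hnoniso : ∀ i j, i ≠ j → IsEmpty (M i ≃ₗ[A] M j))
    (hfield : ∀ i, IsField (Module.End A (M i))) (i : Fin r)
    (f g : Module.End A (∀ l, Fin (s l) → M l)) :
    s8bb (A := A) s i (f * g) = s8bb s i f * s8bb s i g := by
  apply Matrix.ext; intro a b
  apply LinearMap.ext; intro y
  have lhs1 : s8bb (A := A) s i (f * g) a b y
      = s8pp (A := A) s i a (f (g (s8jj (A := A) s i b y))) := rfl
  have rhs1 : (s8bb (A := A) s i f * s8bb (A := A) s i g) a b y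
      = ∑ c, s8pp (A := A) s i a (f (s8jj (A := A) s i c
          (s8pp (A := A) s i c (g (s8jj (A := A) s i b y))))) := by
    simp [Matrix.mul_apply, LinearMap.sum_apply, Module.End.mul_apply, s8bb]
  rw [lhs1, rhs1]
  conv_lhs => rw [← s8decomp (A := A) s (g (s8jj (A := A) s i b y))]
  simp only [map_sum]
  rw [Finset.sum_eq_single i
    (fun j _ hj => Finset.sum_eq_zero fun c _ =>
      s8key1 s hnoniso hfield (Ne.symm hj) f g a b c y)
    (fun h => absurd (Finset.mem_univ i) h)]

lemma s8bb_one (i : Fin r) : s8bb (A := A) (M := M) s i 1 = 1 := by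
  apply Matrix.ext; intro a b
  apply LinearMap.ext; intro y
  have lhs1 : s8bb (A := A) (M := M) s i 1 a b y
      = s8pp (A := A) s i a (s8jj (A := A) s i b y) := rfl
  rw [lhs1, s8pp_jj]
  by_cases hab : a = b
  · subst hab; simp [Matrix.one_apply]
  · simp [Matrix.one_apply, hab, Pi.single_eq_of_ne hab]

lemma s8bb_add (i : Fin r) (f g : Module.End A (∀ l, Fin (s l) → M l)) :
    s8bb (A := A) s i (f + g) = s8bb s i f + s8bb s i g := by
  apply Matrix.ext; intro a b
  apply LinearMap.ext; intro y
  simp [s8bb, Matrix.add_apply, LinearMap.add_apply, map_add]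

lemma s8bb_sub (i : Fin r) (f g : Module.End A (∀ l, Fin (s l) → M l)) :
    s8bb (A := A) s i (f - g) = s8bb s i f - s8bb s i g := by
  apply Matrix.ext; intro a b
  apply LinearMap.ext; intro y
  simp [s8bb, Matrix.sub_apply, LinearMap.sub_apply, map_sub]

lemma s8bb_dd (i : Fin r) (m : ∀ i, Matrix (Fin (s i)) (Fin (s i)) (Module.End A (M i))) :
    s8bb (A := A) s i (s8dd s m) = m i := by
  apply Matrix.ext; intro a b
  apply LinearMap.ext; intro y
  have lhs1 : s8bb (A := A) s i (s8dd s m) a b y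
      = s8dd (A := A) s m (s8jj (A := A) s i b y) i a := rfl
  rw [lhs1, s8dd_apply]
  have h1 : (s8jj (A := A) s i b y) i = Pi.single b y := Pi.single_eq_same i _
  rw [Finset.sum_congr rfl fun c _ => by rw [h1]]
  rw [Finset.sum_eq_single b
    (fun c _ hc => by rw [Pi.single_eq_of_ne hc, map_zero])
    (fun h => absurd (Finset.mem_univ b) h), Pi.single_eq_same]

lemma s8ee_blk_zero (i : Fin r) (f : Module.End A (∀ l, Fin (s l) → M l))
    (h : s8bb (A := A) s i f = 0) :
    s8ee (A := A) s i * (f * s8ee s i) = 0 := by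
  have mid : ∀ v : Fin (s i) → M i, (f (Pi.single i v)) i = 0 := by
    intro v
    have hv : v = ∑ b, Pi.single b (v b) := (Finset.univ_sum_single v).symm
    have hv2 : (Pi.single i v : ∀ l, Fin (s l) → M l) = ∑ b, s8jj (A := A) s i b (v b) := by
      calc (Pi.single i v : ∀ l, Fin (s l) → M l)
          = (LinearMap.single A (fun l => Fin (s l) → M l) i) v := rfl
        _ = (LinearMap.single A (fun l => Fin (s l) → M l) i) (∑ b, Pi.single b (v b)) := by
            rw [← hv]
        _ = ∑ b, s8jj (A := A) s i b (v b) := by rw [map_sum]; rfl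
    rw [hv2, map_sum, Finset.sum_apply]
    refine Finset.sum_eq_zero fun b _ => ?_
    funext a
    have := LinearMap.congr_fun (show s8bb (A := A) s i f a b = 0 by rw [h]; rfl) (v b)
    exact this
  apply LinearMap.ext; intro x
  simp only [Module.End.mul_apply, LinearMap.zero_apply, s8ee_apply]
  rw [mid (x i), Pi.single_zero]

lemma s8unit_of_bb_one (hnoniso : ∀ i j, i ≠ j → IsEmpty (M i ≃ₗ[A] M j))
    (hfield : ∀ i, IsField (Module.End A (M i)))
    (h : Module.End A (∀ l, Fin (s l) → M l)) (hb : ∀ i, s8bb (A := A) s i h = 1) :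
    IsUnit h := by
  classical
  have hdiag : ∀ i ∈ Finset.univ, s8ee (A := A) (M := M) s i * ((h - 1) * s8ee s i) = 0 := by
    intro i _
    apply s8ee_blk_zero
    rw [s8bb_sub, hb, s8bb_one, sub_self]
  have hsum : (∑ i, s8ee (A := A) (M := M) s i) = 1 := s8ee_sum s
  obtain ⟨y, hy1, hy2, _⟩ := corner_unit (s8ee (A := A) (M := M) s)
    (fun i => s8ee_idem s i) (fun i j hij => s8ee_orth s hij)
    (fun i j hij f g => s8ee_key s hnoniso hfield hij f g)
    Finset.univ (h - 1)
    (by rw [hsum, one_mul, mul_one]) hdiag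
  rw [hsum] at hy1 hy2
  have h1 : (1 : Module.End A (∀ l, Fin (s l) → M l)) + (h - 1) = h := by abel
  rw [h1] at hy1 hy2
  exact isUnit_iff_exists.mpr ⟨y, hy1, hy2⟩

lemma s8isUnit_iff (hnoniso : ∀ i j, i ≠ j → IsEmpty (M i ≃ₗ[A] M j))
    (hfield : ∀ i, IsField (Module.End A (M i)))
    (f : Module.End A (∀ l, Fin (s l) → M l)) :
    IsUnit f ↔ ∀ i, IsUnit (s8bb (A := A) s i f) := by
  constructor
  · rintro ⟨u, rfl⟩ i
    refine isUnit_iff_exists.mpr ⟨s8bb (A := A) s i (↑u⁻¹ : Module.End A (∀ l, Fin (s l) → M l)), ?_, ?_⟩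
    · rw [← s8bb_mul s hnoniso hfield, Units.mul_inv, s8bb_one]
    · rw [← s8bb_mul s hnoniso hfield, Units.inv_mul, s8bb_one]
  · intro hb
    set g := s8dd (A := A) (M := M) s (fun i => Units.val ((hb i).unit⁻¹)) with hg
    have hfg : ∀ i, s8bb (A := A) s i (f * g) = 1 := fun i => by
      rw [s8bb_mul s hnoniso hfield, hg, s8bb_dd]
      exact (hb i).mul_val_inv
    have hgf : ∀ i, s8bb (A := A) s i (g * f) = 1 := fun i => by
      rw [s8bb_mul s hnoniso hfield, hg, s8bb_dd]
      exact (hb i).val_inv_mul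
    have u1 := s8unit_of_bb_one s hnoniso hfield _ hfg
    have u2 := s8unit_of_bb_one s hnoniso hfield _ hgf
    obtain ⟨z1, hz1, hz1'⟩ := isUnit_iff_exists.mp u1
    obtain ⟨z2, hz2, hz2'⟩ := isUnit_iff_exists.mp u2
    have hr : f * (g * z1) = 1 := by rw [← mul_assoc]; exact hz1
    have hl : (z2 * g) * f = 1 := by rw [mul_assoc]; exact hz2'
    have heq : z2 * g = g * z1 := by
      calc z2 * g = (z2 * g) * (f * (g * z1)) := by rw [hr, mul_one]
        _ = ((z2 * g) * f) * (g * z1) := by noncomm_ring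
        _ = g * z1 := by rw [hl, one_mul]
    exact isUnit_iff_exists.mpr ⟨g * z1, hr, heq ▸ hl⟩

end stmt8aux


lemma s8num (Q n : ℕ) :
    Q ^ (n * n) * ∏ t ∈ Finset.range n, (Q ^ (n - t) - 1)
      = (∏ t ∈ Finset.range n, (Q ^ n - Q ^ t)) * ∏ t ∈ Finset.range n, Q ^ (n - t) := by
  rw [← Finset.prod_mul_distrib]
  have hstep : ∀ t ∈ Finset.range n, (Q ^ n - Q ^ t) * Q ^ (n - t)
      = (Q ^ (n - t) - 1) * Q ^ n := by
    intro t ht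
    have h1 : t ≤ n := le_of_lt (Finset.mem_range.mp ht)
    rw [Nat.sub_mul, Nat.sub_mul, one_mul, ← pow_add, ← pow_add,
      Nat.add_sub_cancel' h1, add_comm, pow_add]
  rw [Finset.prod_congr rfl hstep, Finset.prod_mul_distrib, Finset.prod_const,
    Finset.card_range, ← pow_mul, mul_comm]


/-- Let `k` be a finite field with `q` elements, `A` a finite-dimensional
`k`-algebra, and `M₁, ..., M_r` pairwise non-isomorphic finite-dimensional `A`-modules such
that each `End_A(Mᵢ)` is a field with `q^{εᵢ}` elements, where `εᵢ = dim_k End_A(Mᵢ)`.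
Let `s₁, ..., s_r` be positive integers and `M = ⊕ᵢ Mᵢ^{⊕sᵢ}`. Then
`|End_A(M)| * ∏ᵢ ∏_{t=0}^{sᵢ-1} (q^{(sᵢ-t)εᵢ} - 1) = |Aut_A(M)| * ∏ᵢ ∏_{t=0}^{sᵢ-1} q^{(sᵢ-t)εᵢ}`,
i.e. `|End_A(M)| / |Aut_A(M)| = ∏ᵢ ∏_{t=0}^{sᵢ-1} (1 - q^{-(sᵢ-t)εᵢ})⁻¹`. -/
theorem stmt8 (k : Type) [Field k] [Fintype k] (q : ℕ) (hq : Fintype.card k = q)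
    (A : Type) [Ring A] [Algebra k A] [FiniteDimensional k A]
    (r : ℕ) (M : Fin r → Type)
    [∀ i, AddCommGroup (M i)] [∀ i, Module k (M i)] [∀ i, Module A (M i)]
    [∀ i, IsScalarTower k A (M i)] [∀ i, SMulCommClass k A (M i)]
    [∀ i, FiniteDimensional k (M i)]
    (hnoniso : ∀ i j, i ≠ j → IsEmpty (M i ≃ₗ[A] M j))
    (ε : Fin r → ℕ) (hε : ∀ i, ε i = Module.finrank k (Module.End A (M i)))
    (hfield : ∀ i, IsField (Module.End A (M i)))
    (hcard : ∀ i, Nat.card (Module.End A (M i)) = q ^ ε i)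
    (s : Fin r → ℕ) (hs : ∀ i, 0 < s i) :
    Nat.card (Module.End A (∀ i, Fin (s i) → M i)) *
        ∏ i, ∏ t ∈ Finset.range (s i), (q ^ ((s i - t) * ε i) - 1) =
      Nat.card ((∀ i, Fin (s i) → M i) ≃ₗ[A] (∀ i, Fin (s i) → M i)) *
        ∏ i, ∏ t ∈ Finset.range (s i), q ^ ((s i - t) * ε i) := by
  classical
  haveI hfinM : ∀ i, Finite (M i) := fun i => Module.finite_of_finite k
  haveI hfinE : Finite (Module.End A (∀ i, Fin (s i) → M i)) :=
    Finite.of_injective _ (DFunLike.coe_injective (F := Module.End A (∀ i, Fin (s i) → M i)))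
  haveI hfinD : ∀ i, Finite (Module.End A (M i)) :=
    fun i => Finite.of_injective _ (DFunLike.coe_injective (F := Module.End A (M i)))
  -- the additive bijection
  have equiv1 : Module.End A (∀ i, Fin (s i) → M i) ≃
      ({n : Module.End A (∀ i, Fin (s i) → M i) // ∀ i, s8bb (A := A) s i n = 0} ×
        ∀ i, Matrix (Fin (s i)) (Fin (s i)) (Module.End A (M i))) :=
  { toFun := fun f => (⟨f - s8dd (A := A) s (fun i => s8bb (A := A) s i f), fun i => by
        rw [s8bb_sub, s8bb_dd, sub_self]⟩, fun i => s8bb (A := A) s i f)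
    invFun := fun nm => nm.1.1 + s8dd (A := A) s nm.2
    left_inv := fun f => by simp
    right_inv := fun nm => by
      have hβ : ∀ i, s8bb (A := A) s i (nm.1.1 + s8dd (A := A) s nm.2) = nm.2 i := fun i => by
        rw [s8bb_add, nm.1.2 i, s8bb_dd, zero_add]
      refine Prod.ext ?_ ?_
      · apply Subtype.ext
        show nm.1.1 + s8dd (A := A) s nm.2 -
            s8dd (A := A) s (fun i => s8bb (A := A) s i (nm.1.1 + s8dd (A := A) s nm.2)) = nm.1.1
        rw [funext hβ]
        abel
      · funext i; exact hβ i }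
  -- the multiplicative bijection
  have hU : ∀ (n : {n : Module.End A (∀ i, Fin (s i) → M i) // ∀ i, s8bb (A := A) s i n = 0})
      (U : ∀ i, (Matrix (Fin (s i)) (Fin (s i)) (Module.End A (M i)))ˣ),
      IsUnit (n.1 + s8dd (A := A) s (fun i => (U i).val)) := fun n U => by
    rw [s8isUnit_iff s hnoniso hfield]
    intro i
    rw [s8bb_add, n.2 i, s8bb_dd, zero_add]
    exact (U i).isUnit
  have equiv2 : (Module.End A (∀ i, Fin (s i) → M i))ˣ ≃
      ({n : Module.End A (∀ i, Fin (s i) → M i) // ∀ i, s8bb (A := A) s i n = 0} ×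
        ∀ i, (Matrix (Fin (s i)) (Fin (s i)) (Module.End A (M i)))ˣ) :=
  { toFun := fun u => (⟨u.val - s8dd (A := A) s (fun i => s8bb (A := A) s i u.val), fun i => by
        rw [s8bb_sub, s8bb_dd, sub_self]⟩,
      fun i => ⟨s8bb (A := A) s i u.val, s8bb (A := A) s i (↑u⁻¹),
        by rw [← s8bb_mul s hnoniso hfield, Units.mul_inv, s8bb_one],
        by rw [← s8bb_mul s hnoniso hfield, Units.inv_mul, s8bb_one]⟩)
    invFun := fun nU => (hU nU.1 nU.2).unit
    left_inv := fun u => by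
      apply Units.ext
      show (hU _ _).unit.val = u.val
      rw [IsUnit.unit_spec]
      simp
    right_inv := fun nU => by
      have hβ : ∀ i, s8bb (A := A) s i ((hU nU.1 nU.2).unit.val) = (nU.2 i).val := fun i => by
        rw [IsUnit.unit_spec, s8bb_add, nU.1.2 i, s8bb_dd, zero_add]
      refine Prod.ext ?_ ?_
      · apply Subtype.ext
        show (hU nU.1 nU.2).unit.val -
            s8dd (A := A) s (fun i => s8bb (A := A) s i ((hU nU.1 nU.2).unit.val)) = nU.1.1
        rw [funext hβ, IsUnit.unit_spec]
        abel
      · funext i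
        apply Units.ext
        exact hβ i }
  have card1 : Nat.card (Module.End A (∀ i, Fin (s i) → M i)) =
      Nat.card {n : Module.End A (∀ i, Fin (s i) → M i) // ∀ i, s8bb (A := A) s i n = 0} *
        ∏ i, Nat.card (Matrix (Fin (s i)) (Fin (s i)) (Module.End A (M i))) := by
    rw [Nat.card_congr equiv1, Nat.card_prod, Nat.card_pi]
  have card2 : Nat.card (Module.End A (∀ i, Fin (s i) → M i))ˣ =
      Nat.card {n : Module.End A (∀ i, Fin (s i) → M i) // ∀ i, s8bb (A := A) s i n = 0} *
        ∏ i, Nat.card (Matrix (Fin (s i)) (Fin (s i)) (Module.End A (M i)))ˣ := by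
    rw [Nat.card_congr equiv2, Nat.card_prod, Nat.card_pi]
  have cardAut : Nat.card ((∀ i, Fin (s i) → M i) ≃ₗ[A] (∀ i, Fin (s i) → M i)) =
      Nat.card (Module.End A (∀ i, Fin (s i) → M i))ˣ :=
    Nat.card_congr (LinearMap.GeneralLinearGroup.generalLinearEquiv A
      (∀ i, Fin (s i) → M i)).symm.toEquiv
  have cardMat : ∀ i, Nat.card (Matrix (Fin (s i)) (Fin (s i)) (Module.End A (M i)))
      = (q ^ ε i) ^ (s i * s i) := fun i => by
    have h0 : Nat.card (Matrix (Fin (s i)) (Fin (s i)) (Module.End A (M i)))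
        = Nat.card (Fin (s i) → Fin (s i) → Module.End A (M i)) := rfl
    rw [h0, Nat.card_fun, Nat.card_fun, Nat.card_eq_fintype_card (α := Fin (s i)),
      Fintype.card_fin, hcard i, ← pow_mul]
  have cardGL : ∀ i, Nat.card (Matrix (Fin (s i)) (Fin (s i)) (Module.End A (M i)))ˣ
      = ∏ t ∈ Finset.range (s i), ((q ^ ε i) ^ (s i) - (q ^ ε i) ^ t) := fun i => by
    letI : Fintype (Module.End A (M i)) := Fintype.ofFinite _
    letI : Field (Module.End A (M i)) := (hfield i).toField
    have h := Matrix.card_GL_field (𝔽 := Module.End A (M i)) (s i)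
    have hc : Fintype.card (Module.End A (M i)) = q ^ ε i := by
      rw [← Nat.card_eq_fintype_card, hcard i]
    rw [hc] at h
    rw [← Fin.prod_univ_eq_prod_range (fun t => (q ^ ε i) ^ (s i) - (q ^ ε i) ^ t) (s i)]
    exact h
  rw [cardAut, card1, card2, mul_assoc, mul_assoc, ← Finset.prod_mul_distrib,
    ← Finset.prod_mul_distrib]
  congr 1
  refine Finset.prod_congr rfl fun i _ => ?_
  rw [cardMat i, cardGL i]
  have hexp : ∀ t, q ^ ((s i - t) * ε i) = (q ^ ε i) ^ (s i - t) := fun t => by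
    rw [mul_comm, pow_mul]
  rw [Finset.prod_congr rfl fun t _ => hexp t,
    Finset.prod_congr rfl fun t _ => congrArg (· - 1) (hexp t)]
  exact s8num (q ^ ε i) (s i)
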